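/- Let K be an algebraically closed field, R = K[u_1,…,u_m, x_1,…,x_n], and let H be an ideal of R with H ∩ K[u] = (0) (the variables u are independent for H), and let T ∈ R. Then the contraction (H·R[z] + (T·z − 1)·R[z]) ∩ K[u] is nonzero if and only if T belongs to every minimal prime p over H satisfying p ∩ K[u] = (0); that is, if and only if T vanishes identically on all irreducible components of V(H) where the u-variables remain independent. -/
import Mathlib

open MvPolynomial

section Aux

variable {K : Type*} [Field K] {m n : ℕ}

/-- Key saturation lemma: if `C f` lies in `H·R[z] + (CT·X − 1)`, then some `T^k * f ∈ H`. -/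
lemma aux_sat {R : Type*} [CommRing R] (H : Ideal R) (T f : R)
    (hf : Polynomial.C f ∈ H.map (Polynomial.C : R →+* Polynomial R) +
      Ideal.span {Polynomial.C T * Polynomial.X - 1}) :
    ∃ k : ℕ, T ^ k * f ∈ H := by
  classical
  let S := Localization.Away T
  let φ : Polynomial R →+* S :=
    Polynomial.eval₂RingHom (algebraMap R S) (IsLocalization.Away.invSelf T)
  have hφC : ∀ r : R, φ (Polynomial.C r) = algebraMap R S r := fun r => by
    simp [φ, Polynomial.eval₂_C]
  have hJ : H.map (Polynomial.C : R →+* Polynomial R) +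
      Ideal.span {Polynomial.C T * Polynomial.X - 1} ≤
      (H.map (algebraMap R S)).comap φ := by
    refine sup_le ?_ ?_
    · rw [Ideal.map_le_iff_le_comap]
      intro h hh
      simp only [Ideal.mem_comap, hφC]
      exact Ideal.mem_map_of_mem _ hh
    · rw [Ideal.span_le]
      intro y hy
      simp only [Set.mem_singleton_iff] at hy
      subst hy
      simp only [SetLike.mem_coe, Ideal.mem_comap, map_sub, map_mul, map_one, hφC]
      have : φ Polynomial.X = IsLocalization.Away.invSelf T := by
        simp [φ]
      rw [this, IsLocalization.Away.mul_invSelf, sub_self]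
      exact Ideal.zero_mem _
  have hmem : algebraMap R S f ∈ H.map (algebraMap R S) := by
    have := hJ hf
    rwa [Ideal.mem_comap, hφC] at this
  rw [IsLocalization.mem_map_algebraMap_iff (Submonoid.powers T) S] at hmem
  obtain ⟨⟨⟨a, ha⟩, t⟩, hat⟩ := hmem
  rw [← map_mul, IsLocalization.eq_iff_exists (Submonoid.powers T) S] at hat
  obtain ⟨c, hc⟩ := hat
  obtain ⟨j, hj⟩ := c.2
  obtain ⟨k, hk⟩ := t.2
  change T ^ j = (c : R) at hj
  change T ^ k = (t : R) at hk
  refine ⟨j + k, ?_⟩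
  have h1 : (c : R) * (f * t) ∈ H := hc ▸ H.mul_mem_left _ ha
  rw [← hj, ← hk] at h1
  have e : T ^ (j + k) * f = T ^ j * (f * T ^ k) := by ring
  rw [e]
  exact h1

end Aux

theorem stmt_4 {K : Type*} [Field K] [IsAlgClosed K] {m n : ℕ}
    (H : Ideal (MvPolynomial (Fin m ⊕ Fin n) K))
    (T : MvPolynomial (Fin m ⊕ Fin n) K)
    (hind : H.comap (MvPolynomial.rename (Sum.inl : Fin m → Fin m ⊕ Fin n)).toRingHom = ⊥) :
    (H.map (Polynomial.C :
            MvPolynomial (Fin m ⊕ Fin n) K →+* Polynomial (MvPolynomial (Fin m ⊕ Fin n) K)) +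
          Ideal.span {Polynomial.C T * Polynomial.X - 1}).comap
        ((Polynomial.C :
            MvPolynomial (Fin m ⊕ Fin n) K →+* Polynomial (MvPolynomial (Fin m ⊕ Fin n) K)).comp
          (MvPolynomial.rename (Sum.inl : Fin m → Fin m ⊕ Fin n)).toRingHom) ≠ ⊥ ↔
      ∀ p ∈ H.minimalPrimes,
        p.comap (MvPolynomial.rename (Sum.inl : Fin m → Fin m ⊕ Fin n)).toRingHom = ⊥ →
          T ∈ p := by
  classical
  set ρ : MvPolynomial (Fin m) K →+* MvPolynomial (Fin m ⊕ Fin n) K :=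
    (MvPolynomial.rename (Sum.inl : Fin m → Fin m ⊕ Fin n)).toRingHom with hρdef
  have hρinj : Function.Injective ρ :=
    MvPolynomial.rename_injective _ Sum.inl_injective
  constructor
  · intro hne p hp hpu
    obtain ⟨q, hqJ, hq0⟩ := Submodule.exists_mem_ne_zero_of_ne_bot hne
    rw [Ideal.mem_comap, RingHom.comp_apply] at hqJ
    obtain ⟨k, hk⟩ := aux_sat H T (ρ q) hqJ
    have hkp : T ^ k * ρ q ∈ p := hp.1.2 hk
    haveI : p.IsPrime := hp.1.1
    rcases this.mem_or_mem hkp with h | h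
    · exact this.mem_of_pow_mem k h
    · exfalso
      have : q ∈ p.comap ρ := h
      rw [hpu] at this
      exact hq0 this
  · intro hT
    -- finitely many minimal primes
    haveI : IsNoetherianRing (MvPolynomial (Fin m ⊕ Fin n) K) := inferInstance
    have hfin : H.minimalPrimes.Finite := by
      rw [Ideal.minimalPrimes_eq_comap]
      exact (minimalPrimes.finite_of_isNoetherianRing _).image _
    -- choice of nonzero elements of contractions for "bad" primes
    let c : Ideal (MvPolynomial (Fin m ⊕ Fin n) K) → MvPolynomial (Fin m) K := fun p =>
      if h : p.comap ρ ≠ ⊥ then (Submodule.exists_mem_ne_zero_of_ne_bot h).choose else 1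
    have hc_mem : ∀ p, p.comap ρ ≠ ⊥ → ρ (c p) ∈ p := by
      intro p h
      have hcp : c p = (Submodule.exists_mem_ne_zero_of_ne_bot h).choose := dif_pos h
      rw [hcp]
      exact (Submodule.exists_mem_ne_zero_of_ne_bot h).choose_spec.1
    have hc_ne : ∀ p, c p ≠ 0 := by
      intro p
      by_cases h : p.comap ρ ≠ ⊥
      · have hcp : c p = (Submodule.exists_mem_ne_zero_of_ne_bot h).choose := dif_pos h
        rw [hcp]
        exact (Submodule.exists_mem_ne_zero_of_ne_bot h).choose_spec.2
      · have hcp : c p = 1 := dif_neg h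
        rw [hcp]
        exact one_ne_zero
    let F : Finset (Ideal (MvPolynomial (Fin m ⊕ Fin n) K)) := hfin.toFinset
    let Q : MvPolynomial (Fin m) K := ∏ p ∈ F, c p
    have hQ0 : Q ≠ 0 := Finset.prod_ne_zero_iff.mpr fun p _ => hc_ne p
    have hTg : T * ρ Q ∈ H.radical := by
      rw [← Ideal.sInf_minimalPrimes, Submodule.mem_sInf]
      intro p hp
      haveI : Ideal.IsPrime p := hp.1.1
      by_cases h : Ideal.comap ρ p = ⊥
      · exact Ideal.mul_mem_right _ _ (hT p hp h)
      · refine Ideal.mul_mem_left _ _ ?_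
        have hpF : p ∈ F := hfin.mem_toFinset.mpr hp
        have : c p ∣ Q := Finset.dvd_prod_of_mem c hpF
        obtain ⟨r, hr⟩ := this
        rw [hr, map_mul]
        exact Ideal.mul_mem_right _ _ (hc_mem p h)
    obtain ⟨N, hN⟩ := Ideal.mem_radical_iff.mp hTg
    refine (Submodule.ne_bot_iff _).mpr ⟨Q ^ N, ?_, pow_ne_zero _ hQ0⟩
    rw [Ideal.mem_comap, RingHom.comp_apply]
    set g := ρ Q with hg
    have hρpow : ρ (Q ^ N) = g ^ N := map_pow ρ Q N
    rw [hρpow]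
    -- C (g^N) = C ((T*g)^N) * X^N - C (g^N) * ((C T * X)^N - 1)
    have key : (Polynomial.C (g ^ N) :
        Polynomial (MvPolynomial (Fin m ⊕ Fin n) K)) =
        Polynomial.C ((T * g) ^ N) * Polynomial.X ^ N -
          Polynomial.C (g ^ N) * ((Polynomial.C T * Polynomial.X) ^ N - 1) := by
      simp only [mul_pow, map_mul, map_pow]
      ring
    rw [key]
    refine Submodule.sub_mem _ ?_ ?_
    · exact Ideal.mem_sup_left (Ideal.mul_mem_right _ _ (Ideal.mem_map_of_mem _ hN))
    · refine Ideal.mem_sup_right (Ideal.mul_mem_left _ _ ?_)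
      rw [Ideal.mem_span_singleton]
      have hd := sub_dvd_pow_sub_pow (Polynomial.C T * Polynomial.X) 1 N
      rwa [one_pow] at hd
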